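/- Let X be a finite set, S a finite set of clustering solutions, and Γ : X × MET(X) × S → [0,∞] a homogeneous and monotone clustering cost function, and define Opt_Γ(X,d) = min_{P ∈ S} Σ_{x∈X} Γ(x,d,P). Let D be a finitely supported probability distribution over metrics ρ on X such that each ρ in the support dominates d and E_D[max_{y≠x} ρ(x,y)/d(x,y)] ≤ K for every x ∈ X, with K ≥ 1 and Opt_Γ(X,d) < ∞. Then: (a) Opt_Γ(X,ρ) ≥ Opt_Γ(X,d) for every ρ in the support of D; and (b) with probability at least 1/2 under D, Opt_Γ(X,ρ) ≤ 2K·Opt_Γ(X,d). -/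

import Mathlib

/-- `d` is a metric on `X`. -/
def IsMetric {X : Type*} (d : X → X → ℝ) : Prop :=
  (∀ x y, 0 ≤ d x y) ∧ (∀ x y, d x y = 0 ↔ x = y) ∧
  (∀ x y, d x y = d y x) ∧ (∀ x y z, d x z ≤ d x y + d y z)

lemma IsMetric.smul_const {X : Type*} {d : X → X → ℝ} (hd : IsMetric d) {l : ℝ} (hl : 0 < l) :
    IsMetric (fun a b => l * d a b) := by
  obtain ⟨h0, he, hs, ht⟩ := hd
  refine ⟨fun x y => mul_nonneg hl.le (h0 x y), fun x y => ?_,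
    fun x y => by simp only [hs x y], fun x y z => ?_⟩
  · constructor
    · intro h
      rcases mul_eq_zero.mp h with h | h
      · exact absurd h hl.ne'
      · exact (he x y).1 h
    · intro h
      show l * d x y = 0
      rw [(he x y).2 h, mul_zero]
  · show l * d x z ≤ l * d x y + l * d y z
    have := ht x y z
    nlinarith

open Classical in
/-- For a homogeneous monotone clustering cost and a distribution over dominating metrics
with expected maximum gradient at most `K`: (a) each dominating metric in the support has
optimum at least `Opt_Γ(X,d)`; (b) with probability at least `1/2`,
`Opt_Γ(X,ρ) ≤ 2K · Opt_Γ(X,d)`. -/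
theorem monotone_clustering_markov
    (X S : Type) [Fintype X] [Fintype S] [Nonempty S]
    (Γ : X → (X → X → ℝ) → S → ENNReal)
    (hhom : ∀ (x : X) (l : ℝ) (δ : X → X → ℝ) (P : S), 0 < l → IsMetric δ →
      Γ x (fun a b => l * δ a b) P = ENNReal.ofReal l * Γ x δ P)
    (hmono : ∀ (x : X) (δ δ' : X → X → ℝ) (P : S), IsMetric δ → IsMetric δ' →
      (∀ y, δ x y ≤ δ' x y) → Γ x δ P ≤ Γ x δ' P)
    (d : X → X → ℝ) (hd : IsMetric d)
    (m : ℕ) (w : Fin m → ℝ) (ρ : Fin m → X → X → ℝ)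
    (hw : ∀ i, 0 ≤ w i) (hw1 : ∑ i, w i = 1)
    (hρ : ∀ i, w i ≠ 0 → IsMetric (ρ i) ∧ ∀ x y, d x y ≤ ρ i x y)
    (K : ℝ) (hK : 1 ≤ K)
    (hgrad : ∀ x : X,
      ∑ i, w i * (⨆ y : {y : X // y ≠ x}, ρ i x y.1 / d x y.1) ≤ K)
    (hfin : (⨅ P : S, ∑ x, Γ x d P) ≠ ⊤) :
    (∀ i, w i ≠ 0 →
      (⨅ P : S, ∑ x, Γ x d P) ≤ ⨅ P : S, ∑ x, Γ x (ρ i) P) ∧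
    ((1 : ℝ) / 2 ≤
      ∑ i ∈ Finset.univ.filter
        (fun i => (⨅ P : S, ∑ x, Γ x (ρ i) P) ≤
          ENNReal.ofReal (2 * K) * ⨅ P : S, ∑ x, Γ x d P), w i) := by
  classical
  have parta : ∀ i, w i ≠ 0 →
      (⨅ P : S, ∑ x, Γ x d P) ≤ ⨅ P : S, ∑ x, Γ x (ρ i) P := by
    intro i hi
    obtain ⟨hmet, hdom⟩ := hρ i hi
    refine iInf_mono fun P => Finset.sum_le_sum fun x _ => ?_
    exact hmono x d (ρ i) P hd hmet (fun y => hdom x y)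
  refine ⟨parta, ?_⟩
  set Opt := ⨅ P : S, ∑ x, Γ x d P with hOptdef
  obtain ⟨P₀, -, hP₀⟩ := Finset.exists_min_image Finset.univ
    (fun P : S => ∑ x, Γ x d P) ⟨Classical.arbitrary S, Finset.mem_univ _⟩
  have hOptP : Opt = ∑ x, Γ x d P₀ :=
    le_antisymm (iInf_le _ _) (le_iInf fun Q => hP₀ Q (Finset.mem_univ Q))
  set b : Fin m → ENNReal := fun i => ⨅ P : S, ∑ x, Γ x (ρ i) P with hb
  -- key expectation bound
  have hE : ∑ i, ENNReal.ofReal (w i) * b i ≤ ENNReal.ofReal K * Opt := by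
    have hlast : ENNReal.ofReal 1 * Opt ≤ ENNReal.ofReal K * Opt :=
      by gcongr
    cases subsingleton_or_nontrivial X with
    | inl hsub =>
      have hbd : ∀ i, w i ≠ 0 → b i = Opt := by
        intro i hi
        obtain ⟨hmet, hdom⟩ := hρ i hi
        have hρd : ρ i = d := by
          funext a c
          have hac : a = c := Subsingleton.elim a c
          rw [hac, (hmet.2.1 c c).2 rfl, (hd.2.1 c c).2 rfl]
        show (⨅ P : S, ∑ x, Γ x (ρ i) P) = Opt
        rw [hρd]
      calc ∑ i, ENNReal.ofReal (w i) * b i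
          ≤ ∑ i, ENNReal.ofReal (w i) * Opt := by
            refine Finset.sum_le_sum fun i _ => ?_
            by_cases hi : w i = 0
            · simp [hi]
            · rw [hbd i hi]
        _ = ENNReal.ofReal (∑ i, w i) * Opt := by
            rw [ENNReal.ofReal_sum_of_nonneg (fun i _ => hw i), Finset.sum_mul]
        _ ≤ ENNReal.ofReal K * Opt := by rw [hw1]; exact hlast
    | inr hnt =>
      set G : Fin m → X → ℝ :=
        fun i x => ⨆ y : {y : X // y ≠ x}, ρ i x y.1 / d x y.1 with hG
      have hdpos : ∀ x (y : X), y ≠ x → 0 < d x y := by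
        intro x y hy
        refine lt_of_le_of_ne (hd.1 x y) fun h => hy ?_
        exact ((hd.2.1 x y).1 h.symm).symm
      have hne : ∀ x : X, Nonempty {y : X // y ≠ x} := by
        intro x
        obtain ⟨y, hy⟩ := exists_ne x
        exact ⟨⟨y, hy⟩⟩
      have hG1 : ∀ i x, w i ≠ 0 → 1 ≤ G i x := by
        intro i x hi
        simp only [hG]
        obtain ⟨hmet, hdom⟩ := hρ i hi
        obtain ⟨y⟩ := hne x
        have h1 : (1:ℝ) ≤ ρ i x y.1 / d x y.1 :=
          (one_le_div (hdpos x y.1 y.2)).2 (hdom x y.1)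
        exact h1.trans (le_ciSup (Set.Finite.bddAbove (Set.finite_range
          (fun z : {y : X // y ≠ x} => ρ i x z.1 / d x z.1))) y)
      have hkey : ∀ i, w i ≠ 0 → ∀ x,
          Γ x (ρ i) P₀ ≤ ENNReal.ofReal (G i x) * Γ x d P₀ := by
        intro i hi x
        obtain ⟨hmet, hdom⟩ := hρ i hi
        have hGpos : (0:ℝ) < G i x := lt_of_lt_of_le one_pos (hG1 i x hi)
        have hle : ∀ y, ρ i x y ≤ G i x * d x y := by
          intro y
          by_cases hy : y = x
          · rw [hy, (hmet.2.1 x x).2 rfl, (hd.2.1 x x).2 rfl, mul_zero]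
          · have hdp := hdpos x y hy
            have hsup : ρ i x y / d x y ≤ G i x := by
              simp only [hG]
              exact le_ciSup (Set.Finite.bddAbove (Set.finite_range
                (fun z : {y : X // y ≠ x} => ρ i x z.1 / d x z.1)))
                (⟨y, hy⟩ : {y : X // y ≠ x})
            calc ρ i x y = (ρ i x y / d x y) * d x y := by field_simp
              _ ≤ G i x * d x y := mul_le_mul_of_nonneg_right hsup hdp.le
        calc Γ x (ρ i) P₀ ≤ Γ x (fun a c => G i x * d a c) P₀ :=
              hmono x (ρ i) _ P₀ hmet (hd.smul_const hGpos) hle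
          _ = ENNReal.ofReal (G i x) * Γ x d P₀ := hhom x (G i x) d P₀ hGpos hd
      calc ∑ i, ENNReal.ofReal (w i) * b i
          ≤ ∑ i, ∑ x, ENNReal.ofReal (w i * G i x) * Γ x d P₀ := by
            refine Finset.sum_le_sum fun i _ => ?_
            by_cases hi : w i = 0
            · simp [hi]
            · have hbi : b i ≤ ∑ x, ENNReal.ofReal (G i x) * Γ x d P₀ :=
                (iInf_le _ P₀).trans (Finset.sum_le_sum fun x _ => hkey i hi x)
              calc ENNReal.ofReal (w i) * b i
                  ≤ ENNReal.ofReal (w i) * ∑ x, ENNReal.ofReal (G i x) * Γ x d P₀ :=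
                    by gcongr
                _ = ∑ x, ENNReal.ofReal (w i * G i x) * Γ x d P₀ := by
                    rw [Finset.mul_sum]
                    refine Finset.sum_congr rfl fun x _ => ?_
                    rw [ENNReal.ofReal_mul (hw i), mul_assoc]
        _ = ∑ x, ENNReal.ofReal (∑ i, w i * G i x) * Γ x d P₀ := by
            rw [Finset.sum_comm]
            refine Finset.sum_congr rfl fun x _ => ?_
            rw [← Finset.sum_mul, ENNReal.ofReal_sum_of_nonneg]
            intro i _
            by_cases hi : w i = 0
            · simp [hi]
            · exact mul_nonneg (hw i) (le_trans zero_le_one (hG1 i x hi))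
        _ ≤ ∑ x, ENNReal.ofReal K * Γ x d P₀ :=
            Finset.sum_le_sum fun x _ =>
              by gcongr; exact hgrad x
        _ = ENNReal.ofReal K * Opt := by rw [← Finset.mul_sum, hOptP]
  -- Markov argument
  have hsplit := Finset.sum_filter_add_sum_filter_not Finset.univ
    (fun i => b i ≤ ENNReal.ofReal (2 * K) * Opt) w
  by_cases hOpt0 : Opt = 0
  · have hnot : ∀ i, ¬ (b i ≤ ENNReal.ofReal (2 * K) * Opt) → w i = 0 := by
      intro i hcon
      by_contra hwi
      have h0 : ∑ j, ENNReal.ofReal (w j) * b j = 0 := by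
        refine le_antisymm ?_ zero_le
        calc ∑ j, ENNReal.ofReal (w j) * b j ≤ ENNReal.ofReal K * Opt := hE
          _ = 0 := by rw [hOpt0, mul_zero]
      have hterm : ENNReal.ofReal (w i) * b i = 0 :=
        (Finset.sum_eq_zero_iff.mp h0) i (Finset.mem_univ i)
      have hwpos : 0 < w i := lt_of_le_of_ne (hw i) (Ne.symm hwi)
      have hbi : b i = 0 := by
        rcases mul_eq_zero.mp hterm with h | h
        · exact absurd h (by simp [ENNReal.ofReal_eq_zero, not_le, hwpos])
        · exact h
      exact hcon (by simp [hbi])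
    have hzero : ∑ i ∈ Finset.univ.filter
        (fun i => ¬ (b i ≤ ENNReal.ofReal (2 * K) * Opt)), w i = 0 :=
      Finset.sum_eq_zero fun i hi => hnot i (Finset.mem_filter.mp hi).2
    rw [hzero, add_zero, hw1] at hsplit
    rw [hsplit]
    norm_num
  · set t := ∑ i ∈ Finset.univ.filter
      (fun i => ¬ (b i ≤ ENNReal.ofReal (2 * K) * Opt)), w i with ht
    have htnn : 0 ≤ t := Finset.sum_nonneg fun i _ => hw i
    have h1 : ENNReal.ofReal t * (ENNReal.ofReal (2 * K) * Opt) ≤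
        ENNReal.ofReal K * Opt := by
      calc ENNReal.ofReal t * (ENNReal.ofReal (2 * K) * Opt)
          = ∑ i ∈ Finset.univ.filter
              (fun i => ¬ (b i ≤ ENNReal.ofReal (2 * K) * Opt)),
              ENNReal.ofReal (w i) * (ENNReal.ofReal (2 * K) * Opt) := by
            rw [ht, ENNReal.ofReal_sum_of_nonneg (fun i _ => hw i), Finset.sum_mul]
        _ ≤ ∑ i ∈ Finset.univ.filter
              (fun i => ¬ (b i ≤ ENNReal.ofReal (2 * K) * Opt)),
              ENNReal.ofReal (w i) * b i :=
            Finset.sum_le_sum fun i hi =>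
              by gcongr; exact (not_le.mp (Finset.mem_filter.mp hi).2).le
        _ ≤ ∑ i, ENNReal.ofReal (w i) * b i :=
            Finset.sum_le_sum_of_subset (Finset.filter_subset _ _)
        _ ≤ ENNReal.ofReal K * Opt := hE
    rw [← mul_assoc, ← ENNReal.ofReal_mul htnn] at h1
    have h2 : ENNReal.ofReal (t * (2 * K)) ≤ ENNReal.ofReal K :=
      (ENNReal.mul_le_mul_iff_left hOpt0 hfin).mp h1
    have h3 : t * (2 * K) ≤ K :=
      (ENNReal.ofReal_le_ofReal_iff (by linarith)).mp h2
    have h4 : t ≤ 1 / 2 := by nlinarith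
    have hsum : ∑ i ∈ Finset.univ.filter
        (fun i => b i ≤ ENNReal.ofReal (2 * K) * Opt), w i = 1 - t := by
      rw [← hw1, ← hsplit, ht]
      ring
    rw [hsum]
    linarith
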